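/- Let R be a G-graded commutative ring and let hT(R) = (hreg(R))^{-1}R be the localization at the set of regular homogeneous elements. If hT(R) is an EM-G-graded ring, then for every homogeneous zero-divisor polynomial f ∈ R[x] there exists c ∈ R such that Ann_{R[x]}(f) = Ann_{R[x]}(c). -/

import Mathlib

open Polynomial

/-- The multiplicatively closed set of homogeneous regular elements of a graded ring. -/
def hreg {G R : Type*} [AddGroup G] [DecidableEq G] [CommRing R]
    (𝒜 : G → AddSubgroup R) [GradedRing 𝒜] : Submonoid R where
  carrier := {r | r ∈ nonZeroDivisors R ∧ ∃ σ : G, r ∈ 𝒜 σ}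
  one_mem' := ⟨one_mem _, 0, SetLike.one_mem_graded 𝒜⟩
  mul_mem' := fun ha hb =>
    ⟨mul_mem ha.1 hb.1, ha.2.choose + hb.2.choose,
      SetLike.mul_mem_graded ha.2.choose_spec hb.2.choose_spec⟩

/-- Let `hT(R) = (hreg R)⁻¹R`. If `hT(R)` (with its induced `G`-grading) is
an EM-`G`-graded ring, then for every homogeneous zero-divisor polynomial `f ∈ R[x]` there
exists `c ∈ R` with `Ann_{R[x]}(f) = Ann_{R[x]}(c)`. -/
theorem stmt_14 {G R : Type*} [AddGroup G] [DecidableEq G] [CommRing R]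
    (𝒜 : G → AddSubgroup R) [GradedRing 𝒜]
    (hEM : ∀ f : Polynomial (Localization (hreg 𝒜)), f ≠ 0 →
      (∃ lam : G, ∀ i, ∃ (a : R) (σ τ : G) (s : hreg 𝒜),
        a ∈ 𝒜 σ ∧ (s : R) ∈ 𝒜 τ ∧ lam = -τ + σ ∧ f.coeff i = Localization.mk a s) →
      f ∉ nonZeroDivisors (Polynomial (Localization (hreg 𝒜))) →
      ∃ (c : Localization (hreg 𝒜)) (g : Polynomial (Localization (hreg 𝒜))),
        c ∉ nonZeroDivisors (Localization (hreg 𝒜)) ∧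
        g ∈ nonZeroDivisors (Polynomial (Localization (hreg 𝒜))) ∧
        f = C c * g) :
    ∀ f : R[X], (∃ σ : G, ∀ i, f.coeff i ∈ 𝒜 σ) → f ∉ nonZeroDivisors R[X] →
      ∃ c : R, ∀ h : R[X], h * f = 0 ↔ h * C c = 0 := by
  intro f hf hzd
  set T := Localization (hreg 𝒜)
  have hle : hreg 𝒜 ≤ nonZeroDivisors R := fun r hr => hr.1
  have hinj : Function.Injective (algebraMap R T) := IsLocalization.injective T hle
  set Φ : R[X] →+* T[X] := Polynomial.mapRingHom (algebraMap R T) with hΦ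
  have hΦinj : Function.Injective Φ := Polynomial.map_injective _ hinj
  have hΦC : ∀ b : R, Φ (C b) = C (algebraMap R T b) := fun b => Polynomial.map_C _
  by_cases hf0 : f = 0
  · exact ⟨0, fun h => by simp [hf0]⟩
  have hΦf0 : Φ f ≠ 0 := fun h => hf0 (hΦinj (h.trans (map_zero Φ).symm))
  obtain ⟨σ, hσ⟩ := hf
  have hhom : ∃ lam : G, ∀ i, ∃ (a : R) (σ' τ : G) (s : hreg 𝒜),
      a ∈ 𝒜 σ' ∧ (s : R) ∈ 𝒜 τ ∧ lam = -τ + σ' ∧ (Φ f).coeff i = Localization.mk a s := by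
    refine ⟨σ, fun i => ⟨f.coeff i, σ, 0, 1, hσ i, SetLike.one_mem_graded 𝒜, by simp, ?_⟩⟩
    rw [Localization.mk_one_eq_algebraMap, hΦ, Polynomial.coe_mapRingHom,
      Polynomial.coeff_map]
  obtain ⟨a, ha0, haf⟩ := Polynomial.notMem_nonZeroDivisors_iff.1 hzd
  have hΦfzd : Φ f ∉ nonZeroDivisors T[X] := by
    intro hmem
    apply ha0
    have h1 : C (algebraMap R T a) * Φ f = 0 := by
      rw [← hΦC, ← map_mul, ← Polynomial.smul_eq_C_mul, haf, map_zero]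
    have h2 : (algebraMap R T a) • Φ f = 0 := by
      rw [Polynomial.smul_eq_C_mul]; exact h1
    have := Polynomial.mem_nonZeroDivisors_iff.1 hmem _ h2
    exact hinj (this.trans (map_zero (algebraMap R T)).symm)
  obtain ⟨c', g, hc', hg, hfactor⟩ := hEM (Φ f) hΦf0 hhom hΦfzd
  obtain ⟨⟨a', s⟩, rfl⟩ : ∃ p : R × hreg 𝒜, Localization.mk p.1 p.2 = c' := by
    induction c' using Localization.induction_on with
    | H p => exact ⟨p, rfl⟩
  refine ⟨a', fun h => ?_⟩
  have hs : IsUnit ((C (algebraMap R T s)) : T[X]) :=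
    (IsLocalization.map_units T s).map Polynomial.C
  have key : Localization.mk a' s * algebraMap R T (s : R) = algebraMap R T a' := by
    rw [Localization.mk_eq_mk'_apply]
    exact IsLocalization.mk'_spec T a' s
  constructor
  · intro hh
    have h1 : (Φ h * C (Localization.mk a' s)) * g = 0 := by
      rw [mul_assoc, ← hfactor, ← map_mul, hh, map_zero]
    have h2 : Φ h * C (Localization.mk a' s) = 0 := hg.2 _ h1
    have h3 : Φ (h * C a') = 0 := by
      rw [map_mul, hΦC, ← key, map_mul, ← mul_assoc, h2, zero_mul]
    exact hΦinj (h3.trans (map_zero Φ).symm)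
  · intro hh
    have h3 : Φ h * C (algebraMap R T a') = 0 := by
      rw [← hΦC, ← map_mul, hh, map_zero]
    have h2 : Φ h * C (Localization.mk a' s) = 0 := by
      have h4 : (Φ h * C (Localization.mk a' s)) * C (algebraMap R T (s : R)) = 0 := by
        rw [mul_assoc, ← map_mul, key]
        exact h3
      exact (IsUnit.mul_left_eq_zero hs).1 h4
    have h1 : Φ (h * f) = 0 := by
      rw [map_mul, hfactor, ← mul_assoc, h2, zero_mul]
    exact hΦinj (h1.trans (map_zero Φ).symm)
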